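/- Suppose H_K(D) is continuously embedded into H^m(D), with Mercer eigenvalues λ_k summable and λ_k ‖e_k‖²_{H^m} ≤ C². Then the integral-type kernel K*(x,y) = Σ_k λ_k² e_k(x)e_k(y) belongs to the mixed Sobolev space H^{m,m}(D × D); specifically, for all multi-indices |α| ≤ m, |β| ≤ m, the series Σ_k λ_k² D^α e_k(x) D^β e_k(y) converges in L²(D × D) with ‖Σ_k λ_k² D^α e_k ⊗ D^β e_k‖_{L²(D×D)} ≤ C² Σ_k λ_k. -/

import Mathlib

open MeasureTheory
open scoped ENNReal NNReal

lemma eLpNorm_tensor_aux {α β : Type*} [MeasurableSpace α] [MeasurableSpace β]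
    {μ : Measure α} {ν : Measure β} [SigmaFinite ν]
    {F : α → ℝ} {G : β → ℝ} (hF : AEMeasurable F μ) (hG : AEMeasurable G ν) :
    eLpNorm (fun p : α × β => F p.1 * G p.2) 2 (μ.prod ν)
      = eLpNorm F 2 μ * eLpNorm G 2 ν := by
  rw [eLpNorm_eq_lintegral_rpow_enorm_toReal two_ne_zero ENNReal.ofNat_ne_top,
      eLpNorm_eq_lintegral_rpow_enorm_toReal two_ne_zero ENNReal.ofNat_ne_top,
      eLpNorm_eq_lintegral_rpow_enorm_toReal two_ne_zero ENNReal.ofNat_ne_top]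
  simp only [ENNReal.toReal_ofNat, enorm_eq_nnnorm]
  have h1 : ∫⁻ p : α × β, (‖F p.1 * G p.2‖₊ : ℝ≥0∞) ^ (2 : ℝ) ∂(μ.prod ν)
      = (∫⁻ x, (‖F x‖₊ : ℝ≥0∞) ^ (2 : ℝ) ∂μ)
        * ∫⁻ y, (‖G y‖₊ : ℝ≥0∞) ^ (2 : ℝ) ∂ν := by
    have h2 : ∀ p : α × β, (‖F p.1 * G p.2‖₊ : ℝ≥0∞) ^ (2 : ℝ)
        = ((‖F p.1‖₊ : ℝ≥0∞) ^ (2 : ℝ)) * ((‖G p.2‖₊ : ℝ≥0∞) ^ (2 : ℝ)) := by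
      intro p
      rw [nnnorm_mul, ENNReal.coe_mul, ENNReal.mul_rpow_of_nonneg]
      positivity
    simp_rw [h2]
    exact lintegral_prod_mul (hF.enorm.pow_const _) (hG.enorm.pow_const _)
  rw [h1, ENNReal.mul_rpow_of_nonneg _ _ (by norm_num : (0:ℝ) ≤ 1/2)]

/-- if `H_K(D) ↪ H^m(D)` with constant `C` and summable Mercer
eigenvalues `λ_k`, then for multi-indices `|α|, |β| ≤ m` the series
`∑_k λ_k² D^α e_k ⊗ D^β e_k` (with `‖D^α e_k‖_{L²} ≤ ‖e_k‖_{H^m}`, so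
`‖D^α e_k‖²_{L²} ≤ C²/λ_k`) converges in `L²(D×D)` with limit of norm at most
`C² ∑_k λ_k`; hence `K* ∈ H^{m,m}(D×D)`. -/
theorem stmt_13 (d : ℕ) (D : Set (EuclideanSpace ℝ (Fin d)))
    (hDopen : IsOpen D) (hDbdd : Bornology.IsBounded D)
    (lam : ℕ → ℝ) (hlam_pos : ∀ k, 0 < lam k) (hlam_sum : Summable lam)
    (C : ℝ) (hC : 0 < C)
    -- `fα k = D^α e_k` and `fβ k = D^β e_k` as elements of `L²(D)`, satisfying
    -- the bound `λ_k ‖e_k‖²_{H^m} ≤ C²` inherited from the embedding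
    (fα fβ : ℕ → Lp ℝ 2 (volume.restrict D))
    (hfα : ∀ k, ‖fα k‖ ^ 2 ≤ C ^ 2 / lam k)
    (hfβ : ∀ k, ‖fβ k‖ ^ 2 ≤ C ^ 2 / lam k)
    -- `g k` is the tensor-product term `λ_k² D^α e_k ⊗ D^β e_k` in `L²(D×D)`
    (g : ℕ → Lp ℝ 2 ((volume.restrict D).prod (volume.restrict D)))
    (hg : ∀ k, (g k : EuclideanSpace ℝ (Fin d) × EuclideanSpace ℝ (Fin d) → ℝ)
      =ᵐ[(volume.restrict D).prod (volume.restrict D)]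
        fun p => (lam k) ^ 2 * (fα k : EuclideanSpace ℝ (Fin d) → ℝ) p.1 *
          (fβ k : EuclideanSpace ℝ (Fin d) → ℝ) p.2) :
    ∃ F : Lp ℝ 2 ((volume.restrict D).prod (volume.restrict D)),
      HasSum g F ∧ ‖F‖ ≤ C ^ 2 * ∑' k, lam k := by
  -- norm bound for each term
  have hnorm : ∀ k, ‖g k‖ ≤ C ^ 2 * lam k := by
    intro k
    have hcongr : eLpNorm (g k) 2 ((volume.restrict D).prod (volume.restrict D))
        = eLpNorm (fun p : EuclideanSpace ℝ (Fin d) × EuclideanSpace ℝ (Fin d) =>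
            ((lam k) ^ 2 * (fα k : EuclideanSpace ℝ (Fin d) → ℝ) p.1) *
            (fβ k : EuclideanSpace ℝ (Fin d) → ℝ) p.2) 2
            ((volume.restrict D).prod (volume.restrict D)) := by
      refine eLpNorm_congr_ae ((hg k).trans ?_)
      filter_upwards with p
      ring
    have hF : AEMeasurable (fun x => (lam k) ^ 2 * (fα k : EuclideanSpace ℝ (Fin d) → ℝ) x)
        (volume.restrict D) :=
      (Lp.aestronglyMeasurable (fα k)).aemeasurable.const_mul _
    have hG : AEMeasurable ((fβ k : EuclideanSpace ℝ (Fin d) → ℝ)) (volume.restrict D) :=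
      (Lp.aestronglyMeasurable (fβ k)).aemeasurable
    have hsmul : eLpNorm (fun x => (lam k) ^ 2 * (fα k : EuclideanSpace ℝ (Fin d) → ℝ) x) 2
          (volume.restrict D)
        = (‖(lam k) ^ 2‖₊ : ℝ≥0∞) * eLpNorm (fα k : EuclideanSpace ℝ (Fin d) → ℝ) 2
          (volume.restrict D) :=
      eLpNorm_const_smul ((lam k) ^ 2) ((fα k : EuclideanSpace ℝ (Fin d) → ℝ)) 2 (volume.restrict D)
    have hkey : ‖g k‖ = (lam k) ^ 2 * ‖fα k‖ * ‖fβ k‖ := by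
      rw [Lp.norm_def, hcongr, eLpNorm_tensor_aux hF hG, hsmul,
        ENNReal.toReal_mul, ENNReal.toReal_mul, ENNReal.coe_toReal,
        ← Lp.norm_def, ← Lp.norm_def]
      have h3 : ((‖(lam k) ^ 2‖₊ : ℝ)) = (lam k) ^ 2 := by
        simp [Real.nnnorm_of_nonneg (sq_nonneg (lam k))]
      rw [h3]
    rw [hkey]
    have h1 := hfα k
    have h2 := hfβ k
    have hlk := hlam_pos k
    have hmul : ‖fα k‖ * ‖fβ k‖ ≤ C ^ 2 / lam k := by
      nlinarith [norm_nonneg (fα k), norm_nonneg (fβ k)]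
    have hdiv : (lam k) ^ 2 * (C ^ 2 / lam k) = C ^ 2 * lam k := by
      field_simp
    calc (lam k) ^ 2 * ‖fα k‖ * ‖fβ k‖ = (lam k) ^ 2 * (‖fα k‖ * ‖fβ k‖) := by ring
      _ ≤ (lam k) ^ 2 * (C ^ 2 / lam k) := mul_le_mul_of_nonneg_left hmul (sq_nonneg _)
      _ = C ^ 2 * lam k := hdiv
  have hsum_norm : Summable (fun k => ‖g k‖) :=
    Summable.of_nonneg_of_le (fun k => norm_nonneg _) hnorm (hlam_sum.mul_left (C ^ 2))
  have hsg : Summable g := Summable.of_norm hsum_norm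
  refine ⟨∑' k, g k, hsg.hasSum, ?_⟩
  calc ‖∑' k, g k‖ ≤ ∑' k, ‖g k‖ := norm_tsum_le_tsum_norm hsum_norm
    _ ≤ ∑' k, C ^ 2 * lam k := Summable.tsum_le_tsum hnorm hsum_norm (hlam_sum.mul_left _)
    _ = C ^ 2 * ∑' k, lam k := tsum_mul_left
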